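/- The norm-sign compressor satisfies Assumption 3 with p = ∞ and φ = 1/2. For every d ≥ 1 and every x ∈ ℝ^d with ‖x‖_∞ ≤ 1, ‖(‖x‖_∞/2)·sign(x) − x‖_∞ ≤ 1/2, where sign is applied componentwise (sign(t) = 1 for t > 0, −1 for t < 0, 0 for t = 0) and ‖x‖_∞ = max_i |x_i|. -/
import Mathlib


/-- The norm-sign compressor `C₃(x) = (‖x‖_∞/2)·sign(x)` satisfies Assumption 3 with
`p = ∞` and `φ = 1/2`: if `‖x‖_∞ ≤ 1` then `‖C₃(x) − x‖_∞ ≤ 1/2`. -/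
theorem norm_sign_compressor_assumption3
    (d : ℕ) (hd : 1 ≤ d) (x : EuclideanSpace ℝ (Fin d))
    (hx : (⨆ i, |x i|) ≤ 1)
    (c : EuclideanSpace ℝ (Fin d))
    (hc : ∀ i, c i = (⨆ j, |x j|) / 2 * Real.sign (x i)) :
    (⨆ i, |c i - x i|) ≤ 1/2 := by
  have hne : Nonempty (Fin d) := ⟨⟨0, hd⟩⟩
  set M := ⨆ j, |x j| with hM
  have hMle : ∀ i, |x i| ≤ M := fun i =>
    le_ciSup (f := fun j => |x j|) (Set.Finite.bddAbove (Set.finite_range _)) i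
  have hM0 : 0 ≤ M := le_trans (abs_nonneg _) (hMle (Classical.arbitrary _))
  apply ciSup_le
  intro i
  rw [hc i]
  rcases lt_trichotomy (x i) 0 with h | h | h
  · rw [Real.sign_of_neg h]
    rw [abs_le]
    constructor <;> nlinarith [hMle i, abs_of_neg h, hx]
  · rw [h, Real.sign_zero]
    simp
  · rw [Real.sign_of_pos h]
    rw [abs_le]
    constructor <;> nlinarith [hMle i, abs_of_pos h, hx]
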